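/- Let L be a lattice (free abelian group of finite rank d) with basis γ₁,…,γ_d and a symmetric bilinear form. With formal series E⁻(-α,z) = exp(Σ_{n>0}(α(-n)/n)zⁿ) = Σ s_{α,n} zⁿ in the symmetric algebra over Q of the graded space ⊕_{n>0} (Q ⊗ L) t^{-n}, the Z-span M(1)_Z of all products s_{α₁,n₁}···s_{α_k,n_k} with αᵢ ∈ L equals the Z-span of such products with each αᵢ restricted to the basis {γ₁,…,γ_d}; in particular s_{-γ_i,n} lies in the Z-span of products of s_{γ_j,m}'s. -/

import Mathlib

/-- In a commutative ring `M` (modeling the Heisenberg VOA `M(1)`) with elements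
`s α n` (the coefficients of `E⁻(-α,z)`) satisfying `s α 0 = 1`, `s 0 n = 0` for `n > 0`,
and the convolution identity `s (α+β) n = Σ_{i+j=n} (s α i)(s β j)`:
the `ℤ`-span `M(1)_ℤ` of all products of the `s α n` (`α ∈ L`) equals the `ℤ`-span of
products of `s` at the basis elements `γᵢ` only; in particular each `s (-γᵢ) n` lies in
the latter. -/
theorem stmt_12 (M : Type*) [CommRing M] (L : Type*) [AddCommGroup L] [Module ℤ L]
    (ι : Type*) [Fintype ι] (b : Module.Basis ι ℤ L)
    (s : L → ℕ → M)
    (h0 : ∀ α, s α 0 = 1)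
    (hzero : ∀ n : ℕ, 0 < n → s 0 n = 0)
    (hadd : ∀ α β n, s (α + β) n = ∑ i ∈ Finset.range (n + 1), s α i * s β (n - i)) :
    Subring.closure {x : M | ∃ α n, s α n = x}
      = Subring.closure {x : M | ∃ i n, s (b i) n = x}
    ∧ ∀ (i : ι) (n : ℕ), s (-(b i)) n ∈ Subring.closure {x : M | ∃ i n, s (b i) n = x} := by
  set R := Subring.closure {x : M | ∃ i n, s (b i) n = x} with hR
  -- closure under negation
  have hneg : ∀ α : L, (∀ n, s α n ∈ R) → ∀ n, s (-α) n ∈ R := by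
    intro α hα n
    induction n using Nat.strong_induction_on with
    | _ n ih =>
      rcases Nat.eq_zero_or_pos n with rfl | hn
      · rw [h0]; exact one_mem R
      · have key : (0 : M) = ∑ i ∈ Finset.range (n + 1), s α i * s (-α) (n - i) := by
          rw [← hadd, add_neg_cancel, hzero n hn]
        rw [Finset.sum_range_succ'] at key
        have : s (-α) n = -∑ i ∈ Finset.range n, s α (i + 1) * s (-α) (n - (i + 1)) := by
          have h := key
          rw [h0, Nat.sub_zero, one_mul] at h
          linear_combination -h
        rw [this]
        refine neg_mem (Subring.sum_mem R fun i hi => mul_mem (hα _) (ih _ ?_))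
        omega
  -- the set of α with all s α n ∈ R is an additive subgroup
  have hS : ∀ α : L, ∀ n, s α n ∈ R := by
    let S : AddSubgroup L :=
      { carrier := {α | ∀ n, s α n ∈ R}
        zero_mem' := by
          intro n
          rcases Nat.eq_zero_or_pos n with rfl | hn
          · rw [h0]; exact one_mem R
          · rw [hzero n hn]; exact zero_mem R
        add_mem' := by
          intro α β hα hβ n
          rw [hadd]
          exact Subring.sum_mem R fun i _ => mul_mem (hα _) (hβ _)
        neg_mem' := by
          intro α hα
          exact hneg α hα }
    intro α
    have hb : ∀ i, b i ∈ S := fun i n => Subring.subset_closure ⟨i, n, rfl⟩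
    have hmem : α ∈ S := by
      rw [← b.sum_repr α]
      refine AddSubgroup.sum_mem S fun i _ => ?_
      convert zsmul_mem (hb i) (b.repr α i) using 1
      exact (int_smul_eq_zsmul (inferInstanceAs (Module ℤ L)) (b.repr α i) (b i))
    exact hmem
  constructor
  · apply le_antisymm
    · rw [Subring.closure_le]
      rintro x ⟨α, n, rfl⟩
      exact hS α n
    · exact Subring.closure_mono (by rintro x ⟨i, n, rfl⟩; exact ⟨b i, n, rfl⟩)
  · intro i n
    exact hS (-(b i)) n
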